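/- Let ψ_1, …, ψ_N ∈ ℓ²(ℤ) be an orthonormal family of complex sequences, and set ρ(n) = ∑_{j=1}^N |ψ_j(n)|² for n ∈ ℤ. Then ∑_{n∈ℤ} ρ(n)³ ≤ ∑_{j=1}^N ∑_{n∈ℤ} |Dψ_j(n)|², where (Dψ)(n) = ψ(n+1) − ψ(n). -/

import Mathlib

open Complex

private lemma sum_sq_summable' {f g : ℤ → ℂ}
    (hf : Summable fun n => ‖f n‖ ^ 2) (hg : Summable fun n => ‖g n‖ ^ 2) :
    Summable fun n => f n * (starRingEnd ℂ) (g n) := by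
  apply Summable.of_norm
  have hb : Summable fun n => (‖f n‖ ^ 2 + ‖g n‖ ^ 2) / 2 := (hf.add hg).div_const 2
  apply Summable.of_nonneg_of_le (fun n => norm_nonneg _) (fun n => ?_) hb
  rw [norm_mul, RCLike.norm_conj]
  nlinarith [sq_nonneg (‖f n‖ - ‖g n‖), norm_nonneg (f n), norm_nonneg (g n)]

private lemma bessel' (N : ℕ) (ψ : Fin N → ℤ → ℂ)
    (hl2 : ∀ j, Summable fun n : ℤ => ‖ψ j n‖ ^ 2)
    (horth : ∀ j k, (∑' n : ℤ, ψ j n * (starRingEnd ℂ) (ψ k n)) = if j = k then 1 else 0)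
    (b : Fin N → ℂ) :
    HasSum (fun n : ℤ => ‖∑ j, b j * (starRingEnd ℂ) (ψ j n)‖ ^ 2) (∑ j, ‖b j‖ ^ 2) := by
  classical
  have hpair : ∀ p : Fin N × Fin N, HasSum
      (fun n : ℤ => (b p.1 * (starRingEnd ℂ) (b p.2)) * ((starRingEnd ℂ) (ψ p.1 n) * ψ p.2 n))
      ((b p.1 * (starRingEnd ℂ) (b p.2)) * (if p.1 = p.2 then 1 else 0)) := by
    rintro ⟨j, k⟩
    have h1 : HasSum (fun n : ℤ => ψ j n * (starRingEnd ℂ) (ψ k n)) (if j = k then 1 else 0) := by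
      have h := (sum_sq_summable' (hl2 j) (hl2 k)).hasSum
      rwa [horth j k] at h
    have h2 := h1.star
    have h3 : HasSum (fun n : ℤ => (starRingEnd ℂ) (ψ j n) * ψ k n) (if j = k then 1 else 0) := by
      convert h2 using 1
      · funext n
        simp [star_mul', mul_comm]
      · simp [apply_ite (starRingEnd ℂ)]
    exact h3.mul_left _
  have hsum := hasSum_sum (s := (Finset.univ : Finset (Fin N × Fin N))) (fun p _ => hpair p)
  have hfun : (fun n : ℤ => ∑ p : Fin N × Fin N,
        (b p.1 * (starRingEnd ℂ) (b p.2)) * ((starRingEnd ℂ) (ψ p.1 n) * ψ p.2 n))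
      = fun n : ℤ => ((‖∑ j, b j * (starRingEnd ℂ) (ψ j n)‖ ^ 2 : ℝ) : ℂ) := by
    funext n
    have hmc : ((‖∑ j, b j * (starRingEnd ℂ) (ψ j n)‖ ^ 2 : ℝ) : ℂ)
        = (∑ j, b j * (starRingEnd ℂ) (ψ j n)) *
          (starRingEnd ℂ) (∑ j, b j * (starRingEnd ℂ) (ψ j n)) := by
      rw [Complex.mul_conj, Complex.normSq_eq_norm_sq]
    rw [hmc, map_sum, Finset.sum_mul_sum, ← Fintype.sum_prod_type']
    apply Finset.sum_congr rfl
    rintro ⟨j, k⟩ -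
    simp only [map_mul, Complex.conj_conj]
    ring
  have hval : (∑ p : Fin N × Fin N, (b p.1 * (starRingEnd ℂ) (b p.2)) *
      (if p.1 = p.2 then 1 else 0)) = ((∑ j, ‖b j‖ ^ 2 : ℝ) : ℂ) := by
    rw [Fintype.sum_prod_type]
    have hrow : ∀ j : Fin N, (∑ k, (b j * (starRingEnd ℂ) (b k)) *
        (if j = k then 1 else 0)) = ((‖b j‖ ^ 2 : ℝ) : ℂ) := by
      intro j
      simp only [mul_ite, mul_one, mul_zero, Finset.sum_ite_eq, Finset.mem_univ, if_true]
      rw [Complex.mul_conj, Complex.normSq_eq_norm_sq]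
    rw [Finset.sum_congr rfl fun j _ => hrow j]
    push_cast
    rfl
  rw [hfun, hval] at hsum
  exact Complex.hasSum_ofReal.mp hsum

private lemma tele' (y : ℤ → ℝ) (a : ℤ) : ∀ M : ℕ,
    ∑ k ∈ Finset.range M, (y (a + k + 1) - y (a + k)) = y (a + M) - y a := by
  intro M
  induction M with
  | zero => simp
  | succ M ih =>
    rw [Finset.sum_range_succ, ih]
    have hcast : (a + ((M : ℤ) + 1)) = a + (M : ℤ) + 1 := by ring
    push_cast
    rw [hcast]
    ring

private lemma agmon' (φ : ℤ → ℂ) (ρ : ℝ) (n₀ : ℤ) (hρ0 : 0 ≤ ρ)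
    (hx : HasSum (fun m : ℤ => ‖φ m‖ ^ 2) ρ)
    (hx' : HasSum (fun m : ℤ => ‖φ (m + 1)‖ ^ 2) ρ)
    (hyn₀ : ‖φ n₀‖ ^ 2 = ρ ^ 2) :
    ρ ^ 3 ≤ ∑' m : ℤ, ‖φ (m + 1) - φ m‖ ^ 2 := by
  classical
  have hD2sum : Summable fun m : ℤ => ‖φ (m + 1) - φ m‖ ^ 2 := by
    apply Summable.of_nonneg_of_le (fun m => sq_nonneg _) (fun m => ?_)
      ((hx'.summable.mul_left 2).add (hx.summable.mul_left 2))
    have h := norm_sub_le (φ (m + 1)) (φ m)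
    have h2 : ‖φ (m + 1) - φ m‖ ^ 2 ≤ (‖φ (m + 1)‖ + ‖φ m‖) ^ 2 :=
      pow_le_pow_left₀ (norm_nonneg _) h 2
    nlinarith [sq_nonneg (‖φ (m + 1)‖ - ‖φ m‖)]
  have hS2sum : Summable fun m : ℤ => (‖φ (m + 1)‖ + ‖φ m‖) ^ 2 := by
    apply Summable.of_nonneg_of_le (fun m => sq_nonneg _) (fun m => ?_)
      ((hx'.summable.mul_left 2).add (hx.summable.mul_left 2))
    nlinarith [sq_nonneg (‖φ (m + 1)‖ - ‖φ m‖)]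
  rcases eq_or_lt_of_le hρ0 with h0 | hρpos
  · rw [← h0]
    simpa using tsum_nonneg fun m : ℤ => sq_nonneg ‖φ (m + 1) - φ m‖
  set B : ℤ → ℝ := fun m => ‖φ (m + 1) - φ m‖ ^ 2 / ρ + ρ / 4 * (‖φ (m + 1)‖ + ‖φ m‖) ^ 2
    with hBdef
  have hBsum : Summable B := (hD2sum.div_const ρ).add (hS2sum.mul_left (ρ / 4))
  have hBnn : ∀ m, 0 ≤ B m := by
    intro m
    have h1 := sq_nonneg ‖φ (m + 1) - φ m‖
    have h2 := sq_nonneg (‖φ (m + 1)‖ + ‖φ m‖)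
    have : (0:ℝ) < ρ := hρpos
    rw [hBdef]
    positivity
  have hstep : ∀ m : ℤ, |‖φ (m + 1)‖ ^ 2 - ‖φ m‖ ^ 2| ≤ B m := by
    intro m
    have h1 : |‖φ (m + 1)‖ - ‖φ m‖| ≤ ‖φ (m + 1) - φ m‖ := abs_norm_sub_norm_le _ _
    have h2 : |‖φ (m + 1)‖ ^ 2 - ‖φ m‖ ^ 2|
        ≤ ‖φ (m + 1) - φ m‖ * (‖φ (m + 1)‖ + ‖φ m‖) := by
      have he : ‖φ (m + 1)‖ ^ 2 - ‖φ m‖ ^ 2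
          = (‖φ (m + 1)‖ - ‖φ m‖) * (‖φ (m + 1)‖ + ‖φ m‖) := by ring
      rw [he, abs_mul, _root_.abs_of_nonneg (show (0:ℝ) ≤ ‖φ (m + 1)‖ + ‖φ m‖ by positivity)]
      exact mul_le_mul_of_nonneg_right h1 (by positivity)
    have h4 : ‖φ (m + 1) - φ m‖ * (‖φ (m + 1)‖ + ‖φ m‖) ≤ B m := by
      have h5 : ‖φ (m + 1) - φ m‖ * (‖φ (m + 1)‖ + ‖φ m‖)
          ≤ (4 * ‖φ (m + 1) - φ m‖ ^ 2 + ρ ^ 2 * (‖φ (m + 1)‖ + ‖φ m‖) ^ 2) / (4 * ρ) := by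
        rw [le_div_iff₀ (by positivity)]
        nlinarith [sq_nonneg (2 * ‖φ (m + 1) - φ m‖ - ρ * (‖φ (m + 1)‖ + ‖φ m‖))]
      have h6 : (4 * ‖φ (m + 1) - φ m‖ ^ 2 + ρ ^ 2 * (‖φ (m + 1)‖ + ‖φ m‖) ^ 2) / (4 * ρ)
          = B m := by
        rw [hBdef]
        field_simp
      rw [← h6]
      exact h5
    exact h2.trans h4
  have hmain : ∀ M : ℕ,
      2 * ‖φ n₀‖ ^ 2 - ‖φ (n₀ - M)‖ ^ 2 - ‖φ (n₀ + M)‖ ^ 2 ≤ ∑' m : ℤ, B m := by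
    intro M
    set y : ℤ → ℝ := fun m => ‖φ m‖ ^ 2 with hydef
    have hL : y n₀ - y (n₀ - M) ≤ ∑ k ∈ Finset.range M, B (n₀ - M + k) := by
      have ht := tele' y (n₀ - M) M
      rw [show n₀ - (M : ℤ) + (M : ℤ) = n₀ by ring] at ht
      rw [← ht]
      exact Finset.sum_le_sum fun k _ => (le_abs_self _).trans (hstep _)
    have hR : y n₀ - y (n₀ + M) ≤ ∑ k ∈ Finset.range M, B (n₀ + k) := by
      have ht := tele' y n₀ M
      have h := Finset.sum_le_sum (s := Finset.range M)
        (f := fun k : ℕ => -B (n₀ + k)) (g := fun k : ℕ => y (n₀ + k + 1) - y (n₀ + k))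
        (fun k _ => (abs_le.mp (hstep _)).1)
      rw [ht, Finset.sum_neg_distrib] at h
      linarith
    have hinjL : Function.Injective (fun k : ℕ => n₀ - M + (k : ℤ)) := by
      intro a b h
      simpa using h
    have hinjR : Function.Injective (fun k : ℕ => n₀ + (k : ℤ)) := by
      intro a b h
      simpa using h
    set F : Finset ℤ := (Finset.range M).map ⟨fun k : ℕ => n₀ - M + (k : ℤ), hinjL⟩ with hF
    set G : Finset ℤ := (Finset.range M).map ⟨fun k : ℕ => n₀ + (k : ℤ), hinjR⟩ with hG
    have hFs : ∑ m ∈ F, B m = ∑ k ∈ Finset.range M, B (n₀ - M + k) := Finset.sum_map _ _ _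
    have hGs : ∑ m ∈ G, B m = ∑ k ∈ Finset.range M, B (n₀ + k) := Finset.sum_map _ _ _
    have hdisj : Disjoint F G := by
      rw [Finset.disjoint_left]
      intro a haF haG
      rw [hF, Finset.mem_map] at haF
      rw [hG, Finset.mem_map] at haG
      obtain ⟨k, hk, hka⟩ := haF
      obtain ⟨l, hl, hla⟩ := haG
      simp only [Function.Embedding.coeFn_mk] at hka hla
      rw [Finset.mem_range] at hk hl
      omega
    have hunion : ∑ m ∈ F, B m + ∑ m ∈ G, B m = ∑ m ∈ F ∪ G, B m :=
      (Finset.sum_union hdisj).symm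
    have htsum : ∑ m ∈ F ∪ G, B m ≤ ∑' m : ℤ, B m :=
      Summable.sum_le_tsum (F ∪ G) (fun m _ => hBnn m) hBsum
    show 2 * y n₀ - y (n₀ - M) - y (n₀ + M) ≤ ∑' m : ℤ, B m
    linarith [hFs, hGs, hL, hR]
  have hcof : Filter.Tendsto (fun m : ℤ => ‖φ m‖ ^ 2) Filter.cofinite (nhds 0) :=
    hx.summable.tendsto_cofinite_zero
  have htendL : Filter.Tendsto (fun M : ℕ => ‖φ (n₀ - M)‖ ^ 2) Filter.atTop (nhds 0) := by
    apply hcof.comp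
    rw [← Nat.cofinite_eq_atTop]
    exact Function.Injective.tendsto_cofinite (f := fun M : ℕ => n₀ - (M : ℤ))
      (fun a b h => by simpa using h)
  have htendR : Filter.Tendsto (fun M : ℕ => ‖φ (n₀ + M)‖ ^ 2) Filter.atTop (nhds 0) := by
    apply hcof.comp
    rw [← Nat.cofinite_eq_atTop]
    exact Function.Injective.tendsto_cofinite (f := fun M : ℕ => n₀ + (M : ℤ))
      (fun a b h => by simpa using h)
  have h2y : 2 * ‖φ n₀‖ ^ 2 ≤ ∑' m : ℤ, B m := by
    have htend : Filter.Tendsto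
        (fun M : ℕ => 2 * ‖φ n₀‖ ^ 2 - ‖φ (n₀ - M)‖ ^ 2 - ‖φ (n₀ + M)‖ ^ 2)
        Filter.atTop (nhds (2 * ‖φ n₀‖ ^ 2 - 0 - 0)) :=
      (tendsto_const_nhds.sub htendL).sub htendR
    have := le_of_tendsto htend (Filter.Eventually.of_forall hmain)
    linarith
  have htsB : ∑' m : ℤ, B m = (∑' m : ℤ, ‖φ (m + 1) - φ m‖ ^ 2) / ρ
      + ρ / 4 * ∑' m : ℤ, (‖φ (m + 1)‖ + ‖φ m‖) ^ 2 := by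
    rw [hBdef, Summable.tsum_add (hD2sum.div_const ρ) (hS2sum.mul_left (ρ / 4)),
      tsum_div_const, tsum_mul_left]
  have hS2 : ∑' m : ℤ, (‖φ (m + 1)‖ + ‖φ m‖) ^ 2 ≤ 4 * ρ := by
    have hsum2 : Summable fun m : ℤ => 2 * ‖φ (m + 1)‖ ^ 2 + 2 * ‖φ m‖ ^ 2 :=
      (hx'.summable.mul_left 2).add (hx.summable.mul_left 2)
    have h := Summable.tsum_le_tsum (f := fun m : ℤ => (‖φ (m + 1)‖ + ‖φ m‖) ^ 2)
      (g := fun m : ℤ => 2 * ‖φ (m + 1)‖ ^ 2 + 2 * ‖φ m‖ ^ 2)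
      (fun m => by beta_reduce; nlinarith [sq_nonneg (‖φ (m + 1)‖ - ‖φ m‖)]) hS2sum hsum2
    rw [Summable.tsum_add (hx'.summable.mul_left 2) (hx.summable.mul_left 2),
      tsum_mul_left, tsum_mul_left, hx.tsum_eq, hx'.tsum_eq] at h
    linarith
  have hfinal : 2 * ρ ^ 2 ≤ (∑' m : ℤ, ‖φ (m + 1) - φ m‖ ^ 2) / ρ + ρ ^ 2 := by
    rw [hyn₀] at h2y
    have h7 : ρ / 4 * ∑' m : ℤ, (‖φ (m + 1)‖ + ‖φ m‖) ^ 2 ≤ ρ / 4 * (4 * ρ) :=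
      mul_le_mul_of_nonneg_left hS2 (by positivity)
    rw [htsB] at h2y
    nlinarith
  have h8 : ρ ^ 2 ≤ (∑' m : ℤ, ‖φ (m + 1) - φ m‖ ^ 2) / ρ := by linarith
  have h9 := mul_le_mul_of_nonneg_right h8 hρ0
  rw [div_mul_cancel₀ _ (ne_of_gt hρpos)] at h9
  calc ρ ^ 3 = ρ ^ 2 * ρ := by ring
    _ ≤ _ := h9

private lemma key' (N : ℕ) (ψ : Fin N → ℤ → ℂ)
    (hl2 : ∀ j, Summable fun n : ℤ => ‖ψ j n‖ ^ 2)
    (horth : ∀ j k, (∑' n : ℤ, ψ j n * (starRingEnd ℂ) (ψ k n)) = if j = k then 1 else 0)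
    (n₀ : ℤ) :
    (∑ j, ‖ψ j n₀‖ ^ 2) ^ 3
      ≤ ∑' m : ℤ, ‖∑ j, (ψ j (m + 1) - ψ j m) * (starRingEnd ℂ) (ψ j n₀)‖ ^ 2 := by
  classical
  have hρ0 : (0:ℝ) ≤ ∑ j, ‖ψ j n₀‖ ^ 2 := Finset.sum_nonneg fun j _ => sq_nonneg _
  have hx : HasSum (fun m : ℤ => ‖∑ j, ψ j m * (starRingEnd ℂ) (ψ j n₀)‖ ^ 2)
      (∑ j, ‖ψ j n₀‖ ^ 2) := by
    have h := bessel' N ψ hl2 horth (fun j => ψ j n₀)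
    have hfun : (fun m : ℤ => ‖∑ j, ψ j n₀ * (starRingEnd ℂ) (ψ j m)‖ ^ 2)
        = fun m : ℤ => ‖∑ j, ψ j m * (starRingEnd ℂ) (ψ j n₀)‖ ^ 2 := by
      funext m
      have heq : (∑ j, ψ j n₀ * (starRingEnd ℂ) (ψ j m))
          = (starRingEnd ℂ) (∑ j, ψ j m * (starRingEnd ℂ) (ψ j n₀)) := by
        rw [map_sum]
        exact Finset.sum_congr rfl fun j _ => by rw [map_mul, Complex.conj_conj, mul_comm]
      rw [heq, RCLike.norm_conj]
    rwa [hfun] at h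
  have hx' : HasSum (fun m : ℤ => ‖∑ j, ψ j (m + 1) * (starRingEnd ℂ) (ψ j n₀)‖ ^ 2)
      (∑ j, ‖ψ j n₀‖ ^ 2) := by
    have h := (Equiv.hasSum_iff (Equiv.addRight (1 : ℤ))).mpr hx
    simpa [Function.comp_def] using h
  have hyn₀ : ‖∑ j, ψ j n₀ * (starRingEnd ℂ) (ψ j n₀)‖ ^ 2 = (∑ j, ‖ψ j n₀‖ ^ 2) ^ 2 := by
    have hre : (∑ j, ψ j n₀ * (starRingEnd ℂ) (ψ j n₀)) = ((∑ j, ‖ψ j n₀‖ ^ 2 : ℝ) : ℂ) := by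
      rw [Complex.ofReal_sum]
      exact Finset.sum_congr rfl fun j _ => by
        rw [Complex.mul_conj, Complex.normSq_eq_norm_sq, Complex.ofReal_pow]
    rw [hre, Complex.norm_real, Real.norm_eq_abs, _root_.abs_of_nonneg hρ0]
  have h := agmon' (fun m : ℤ => ∑ j, ψ j m * (starRingEnd ℂ) (ψ j n₀))
    (∑ j, ‖ψ j n₀‖ ^ 2) n₀ hρ0 hx hx' hyn₀
  have hsub : (fun m : ℤ => ‖(∑ j, ψ j (m + 1) * (starRingEnd ℂ) (ψ j n₀))
      - ∑ j, ψ j m * (starRingEnd ℂ) (ψ j n₀)‖ ^ 2)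
      = fun m : ℤ => ‖∑ j, (ψ j (m + 1) - ψ j m) * (starRingEnd ℂ) (ψ j n₀)‖ ^ 2 := by
    funext m
    rw [← Finset.sum_sub_distrib]
    congr 2
    exact Finset.sum_congr rfl fun j _ => by rw [sub_mul]
  rw [← hsub]
  exact h

theorem stmt_7
    (N : ℕ) (ψ : Fin N → ℤ → ℂ)
    (hl2 : ∀ j, Summable fun n : ℤ => ‖ψ j n‖ ^ 2)
    (horth : ∀ j k, (∑' n : ℤ, ψ j n * (starRingEnd ℂ) (ψ k n)) = if j = k then 1 else 0) :
    (∑' n : ℤ, (∑ j : Fin N, ‖ψ j n‖ ^ 2) ^ 3)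
      ≤ ∑ j : Fin N, ∑' n : ℤ, ‖ψ j (n + 1) - ψ j n‖ ^ 2 := by
  classical
  -- the double-indexed kinetic density
  set W : ℤ × ℤ → ℝ :=
    fun p => ‖∑ j, (ψ j (p.1 + 1) - ψ j p.1) * (starRingEnd ℂ) (ψ j p.2)‖ ^ 2 with hW
  have hWnn : ∀ p, 0 ≤ W p := fun p => sq_nonneg _
  have hWn : ∀ m : ℤ, HasSum (fun n : ℤ => W (m, n)) (∑ j, ‖ψ j (m + 1) - ψ j m‖ ^ 2) :=
    fun m => bessel' N ψ hl2 horth (fun j => ψ j (m + 1) - ψ j m)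
  have hl2' : ∀ j, Summable fun m : ℤ => ‖ψ j (m + 1)‖ ^ 2 := by
    intro j
    have h := (Equiv.summable_iff (Equiv.addRight (1 : ℤ))).mpr (hl2 j)
    simpa [Function.comp_def] using h
  have hηsum : ∀ j, Summable fun m : ℤ => ‖ψ j (m + 1) - ψ j m‖ ^ 2 := by
    intro j
    apply Summable.of_nonneg_of_le (fun m => sq_nonneg _) (fun m => ?_)
      (((hl2' j).mul_left 2).add ((hl2 j).mul_left 2))
    have h := norm_sub_le (ψ j (m + 1)) (ψ j m)
    have h2 : ‖ψ j (m + 1) - ψ j m‖ ^ 2 ≤ (‖ψ j (m + 1)‖ + ‖ψ j m‖) ^ 2 :=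
      pow_le_pow_left₀ (norm_nonneg _) h 2
    nlinarith [sq_nonneg (‖ψ j (m + 1)‖ - ‖ψ j m‖)]
  have hmarg : Summable fun m : ℤ => ∑ j, ‖ψ j (m + 1) - ψ j m‖ ^ 2 :=
    summable_sum fun j _ => hηsum j
  have hWsum : Summable W := by
    rw [summable_prod_of_nonneg hWnn]
    exact ⟨fun m => (hWn m).summable,
      hmarg.congr fun m => ((hWn m).tsum_eq).symm⟩
  have hKsum : Summable fun n : ℤ => ∑' m : ℤ, W (m, n) := by
    have h := hWsum.prod_symm
    have h2 := (summable_prod_of_nonneg (fun p : ℤ × ℤ => hWnn p.swap)).mp h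
    exact h2.2
  have hpoint : ∀ n : ℤ, (∑ j, ‖ψ j n‖ ^ 2) ^ 3 ≤ ∑' m : ℤ, W (m, n) :=
    fun n => key' N ψ hl2 horth n
  have hLHSsum : Summable fun n : ℤ => (∑ j, ‖ψ j n‖ ^ 2) ^ 3 := by
    apply Summable.of_nonneg_of_le (fun n => ?_) hpoint hKsum
    exact pow_nonneg (Finset.sum_nonneg fun j _ => sq_nonneg _) 3
  calc (∑' n : ℤ, (∑ j : Fin N, ‖ψ j n‖ ^ 2) ^ 3)
      ≤ ∑' n : ℤ, ∑' m : ℤ, W (m, n) := Summable.tsum_le_tsum hpoint hLHSsum hKsum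
    _ = ∑' m : ℤ, ∑' n : ℤ, W (m, n) := Summable.tsum_comm hWsum
    _ = ∑' m : ℤ, ∑ j, ‖ψ j (m + 1) - ψ j m‖ ^ 2 := tsum_congr fun m => (hWn m).tsum_eq
    _ = ∑ j, ∑' m : ℤ, ‖ψ j (m + 1) - ψ j m‖ ^ 2 := Summable.tsum_finsetSum fun j _ => hηsum j
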